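/- For every integer n ≥ 1, the packing number of C_4 □ P_n equals ⌈2n/3⌉. -/

import Mathlib

open SimpleGraph Finset
open scoped Classical

/-- Closed neighborhood of a vertex. -/
def closedNbr {V : Type*} (G : SimpleGraph V) (v : V) : Set V :=
  insert v (G.neighborSet v)

/-- `S` is an efficient dominating set: every vertex lies in the closed
neighborhood of exactly one vertex of `S`. -/
def IsEffDomSet {V : Type*} (G : SimpleGraph V) (S : Set V) : Prop :=
  ∀ v : V, ∃! u, u ∈ S ∧ v ∈ closedNbr G u

/-- `S` is a dominating set. -/
def IsDomSet {V : Type*} (G : SimpleGraph V) (S : Set V) : Prop :=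
  ∀ v : V, v ∉ S → ∃ u ∈ S, G.Adj u v

/-- The domination number. -/
noncomputable def domNumber {V : Type*} (G : SimpleGraph V) [Fintype V] : ℕ :=
  sInf {n | ∃ S : Set V, IsDomSet G S ∧ S.ncard = n}

/-- `f` is a `[k]`-Roman dominating function on `G`. -/
noncomputable def IsKRDF {V : Type*} (G : SimpleGraph V) [Fintype V] (k : ℕ) (f : V → ℕ) : Prop :=
  (∀ v, f v ≤ k + 1) ∧
  ∀ v : V, f v < k →
    f v + ∑ u ∈ univ.filter (fun u => G.Adj v u), f u ≥
      k + (univ.filter (fun u => G.Adj v u ∧ 0 < f u)).card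

/-- The `[k]`-Roman domination number. -/
noncomputable def kRoman {V : Type*} (G : SimpleGraph V) [Fintype V] (k : ℕ) : ℕ :=
  sInf {w | ∃ f : V → ℕ, IsKRDF G k f ∧ ∑ v, f v = w}

/-- `S` is a packing: closed neighborhoods of vertices in `S` are pairwise disjoint. -/
def IsPacking {V : Type*} (G : SimpleGraph V) (S : Set V) : Prop :=
  S.Pairwise fun u v => Disjoint (closedNbr G u) (closedNbr G v)

/-- The packing number. -/
noncomputable def packingNumber {V : Type*} (G : SimpleGraph V) [Fintype V] : ℕ :=
  sSup {n | ∃ S : Set V, IsPacking G S ∧ S.ncard = n}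

/-! ### Auxiliary material -/

abbrev Gr (n : ℕ) : SimpleGraph (Fin 4 × Fin n) := (cycleGraph 4).boxProd (pathGraph n)

variable {n : ℕ}

lemma mem_cn {a : Fin 4} {i : Fin n} {w : Fin 4 × Fin n} :
    w ∈ closedNbr (Gr n) (a, i) ↔
      w = (a, i) ∨ ((cycleGraph 4).Adj a w.1 ∧ i = w.2) ∨ ((pathGraph n).Adj i w.2 ∧ a = w.1) := by
  simp [closedNbr, SimpleGraph.boxProd_adj]

lemma col_bound {a : Fin 4} {i : Fin n} {w : Fin 4 × Fin n}
    (h : w ∈ closedNbr (Gr n) (a, i)) : w.2.val ≤ i.val + 1 ∧ i.val ≤ w.2.val + 1 := by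
  rw [mem_cn] at h
  rcases h with rfl | ⟨_, rfl⟩ | ⟨h, _⟩
  · simp
  · omega
  · rw [pathGraph_adj] at h; omega

lemma struct_cn {a : Fin 4} {i : Fin n} {w : Fin 4 × Fin n}
    (h : w ∈ closedNbr (Gr n) (a, i)) :
    (w.2 = i ∧ (w.1 = a ∨ (cycleGraph 4).Adj a w.1)) ∨ w.1 = a := by
  rw [mem_cn] at h
  rcases h with rfl | ⟨h, rfl⟩ | ⟨_, rfl⟩
  · exact Or.inl ⟨rfl, Or.inl rfl⟩
  · exact Or.inl ⟨rfl, Or.inr h⟩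
  · exact Or.inr rfl

lemma disj_of_far {a b : Fin 4} {i j : Fin n}
    (h : i.val + 3 ≤ j.val ∨ j.val + 3 ≤ i.val) :
    Disjoint (closedNbr (Gr n) (a, i)) (closedNbr (Gr n) (b, j)) := by
  rw [Set.disjoint_left]
  intro w h1 h2
  have c1 := col_bound h1
  have c2 := col_bound h2
  omega

lemma disj_opposite {a b : Fin 4} {i j : Fin n} (hb : b = a + 2) (hij : i ≠ j) :
    Disjoint (closedNbr (Gr n) (a, i)) (closedNbr (Gr n) (b, j)) := by
  subst hb
  rw [Set.disjoint_left]
  intro w h1 h2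
  have k1 := struct_cn h1
  have k2 := struct_cn h2
  have d1 : ∀ c : Fin 4, c + 2 ≠ c := by decide
  have d2 : ∀ c : Fin 4, ¬ (cycleGraph 4).Adj c (c + 2) := by decide
  have d3 : ∀ c : Fin 4, ¬ (cycleGraph 4).Adj (c + 2) c := by decide
  rcases k1 with ⟨e1, r1⟩ | r1 <;> rcases k2 with ⟨e2, r2⟩ | r2
  · exact hij (e1 ▸ e2 ▸ rfl)
  · rcases r1 with h | h
    · exact d1 a (r2 ▸ h)
    · exact d2 a (r2 ▸ h)
  · rcases r2 with h | h
    · exact d1 a ((r1 ▸ h).symm)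
    · exact d3 a (r1 ▸ h)
  · exact d1 a (r1 ▸ r2.symm)

lemma not_disj_same_col {a b : Fin 4} (hab : a ≠ b) (i : Fin n) :
    ¬ Disjoint (closedNbr (Gr n) (a, i)) (closedNbr (Gr n) (b, i)) := by
  obtain ⟨c, hc1, hc2⟩ :=
    (by decide : ∀ a b : Fin 4, a ≠ b →
      ∃ c, (c = a ∨ (cycleGraph 4).Adj a c) ∧ (c = b ∨ (cycleGraph 4).Adj b c)) a b hab
  rw [Set.not_disjoint_iff]
  refine ⟨(c, i), ?_, ?_⟩ <;> rw [mem_cn]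
  · rcases hc1 with rfl | h
    · exact Or.inl rfl
    · exact Or.inr (Or.inl ⟨h, rfl⟩)
  · rcases hc2 with rfl | h
    · exact Or.inl rfl
    · exact Or.inr (Or.inl ⟨h, rfl⟩)

lemma opposite_of_adjcol {a b : Fin 4} {i j : Fin n} (hij : (pathGraph n).Adj i j)
    (hd : Disjoint (closedNbr (Gr n) (a, i)) (closedNbr (Gr n) (b, j))) : b = a + 2 := by
  by_contra hb
  rcases (by decide : ∀ a b : Fin 4, b ≠ a + 2 → a = b ∨ (cycleGraph 4).Adj a b) a b hb with rfl | h
  · rw [Set.disjoint_left] at hd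
    exact hd (show (a, i) ∈ _ by rw [mem_cn]; exact Or.inl rfl)
      (show (a, i) ∈ _ by rw [mem_cn]; exact Or.inr (Or.inr ⟨hij.symm, rfl⟩))
  · rw [Set.disjoint_left] at hd
    exact hd (show (b, i) ∈ _ by rw [mem_cn]; exact Or.inr (Or.inl ⟨h, rfl⟩))
      (show (b, i) ∈ _ by rw [mem_cn]; exact Or.inr (Or.inr ⟨hij.symm, rfl⟩))

lemma not_disj_two_col {a : Fin 4} {i j : Fin n} (h : i.val + 2 = j.val) :
    ¬ Disjoint (closedNbr (Gr n) (a, i)) (closedNbr (Gr n) (a, j)) := by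
  have hlt : i.val + 1 < n := by have := j.isLt; omega
  rw [Set.not_disjoint_iff]
  refine ⟨(a, ⟨i.val + 1, hlt⟩), ?_, ?_⟩ <;> rw [mem_cn]
  · exact Or.inr (Or.inr ⟨by rw [pathGraph_adj]; left; rfl, rfl⟩)
  · exact Or.inr (Or.inr ⟨by rw [pathGraph_adj]; right; exact h, rfl⟩)

lemma no_three {S : Set (Fin 4 × Fin n)} (hS : IsPacking (Gr n) S)
    {u v w : Fin 4 × Fin n} (hu : u ∈ S) (hv : v ∈ S) (hw : w ∈ S)
    (h1 : u.2.val + 1 = v.2.val) (h2 : v.2.val + 1 = w.2.val) : False := by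
  obtain ⟨a, i⟩ := u
  obtain ⟨b, j⟩ := v
  obtain ⟨c, k⟩ := w
  simp only at h1 h2
  have huv : (a, i) ≠ (b, j) := by
    intro h; rw [Prod.mk.injEq] at h; omega
  have hvw : (b, j) ≠ (c, k) := by
    intro h; rw [Prod.mk.injEq] at h; omega
  have huw : (a, i) ≠ (c, k) := by
    intro h; rw [Prod.mk.injEq] at h; omega
  have hb : b = a + 2 :=
    opposite_of_adjcol (pathGraph_adj.mpr (Or.inl h1)) (hS hu hv huv)
  have hc : c = b + 2 :=
    opposite_of_adjcol (pathGraph_adj.mpr (Or.inl h2)) (hS hv hw hvw)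
  have hca : c = a := by
    rw [hc, hb]; exact (by decide : ∀ a : Fin 4, a + 2 + 2 = a) a
  subst hca
  exact not_disj_two_col (by omega) (hS hu hw huw)

lemma card_no3 : ∀ m : ℕ, ∀ T : Finset ℕ, (∀ x ∈ T, x < m) →
    (∀ j, j ∈ T → j + 1 ∈ T → j + 2 ∈ T → False) → T.card ≤ (2 * m + 2) / 3 := by
  intro m
  induction m using Nat.strong_induction_on with
  | _ m ih =>
    intro T hlt h3
    by_cases hm : m ≤ 2
    · have : T ⊆ range m := fun x hx => mem_range.mpr (hlt x hx)
      have := card_le_card this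
      rw [card_range] at this
      omega
    · push_neg at hm
      have hsplit := card_filter_add_card_filter_not (s := T) (p := fun x => x < m - 3)
      set T1 := T.filter (fun x => x < m - 3) with hT1
      set T2 := T.filter (fun x => ¬ x < m - 3) with hT2
      have hb1 : T1.card ≤ (2 * (m - 3) + 2) / 3 := by
        apply ih (m - 3) (by omega)
        · intro x hx; exact (mem_filter.mp hx).2
        · intro j hj h1 h2
          exact h3 j (mem_filter.mp hj).1 (mem_filter.mp h1).1 (mem_filter.mp h2).1
      have hb2 : T2.card ≤ 2 := by
        have hmiss := h3 (m - 3)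
        have key : (m - 3) ∉ T ∨ (m - 2) ∉ T ∨ (m - 1) ∉ T := by
          by_contra hc
          push_neg at hc
          exact hmiss hc.1 (by rw [show m - 3 + 1 = m - 2 by omega]; exact hc.2.1)
            (by rw [show m - 3 + 2 = m - 1 by omega]; exact hc.2.2)
        rcases key with hk | hk | hk
        · have : T2 ⊆ {m - 2, m - 1} := by
            intro x hx
            rw [mem_filter] at hx
            have := hlt x hx.1
            have : x ≠ m - 3 := fun h => hk (h ▸ hx.1)
            simp only [mem_insert, mem_singleton]
            omega
          have := card_le_card this
          have : ({m - 2, m - 1} : Finset ℕ).card ≤ 2 :=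
            le_trans (card_insert_le _ _) (by simp)
          omega
        · have : T2 ⊆ {m - 3, m - 1} := by
            intro x hx
            rw [mem_filter] at hx
            have := hlt x hx.1
            have : x ≠ m - 2 := fun h => hk (h ▸ hx.1)
            simp only [mem_insert, mem_singleton]
            omega
          have := card_le_card this
          have : ({m - 3, m - 1} : Finset ℕ).card ≤ 2 :=
            le_trans (card_insert_le _ _) (by simp)
          omega
        · have : T2 ⊆ {m - 3, m - 2} := by
            intro x hx
            rw [mem_filter] at hx
            have := hlt x hx.1
            have : x ≠ m - 1 := fun h => hk (h ▸ hx.1)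
            simp only [mem_insert, mem_singleton]
            omega
          have := card_le_card this
          have : ({m - 3, m - 2} : Finset ℕ).card ≤ 2 :=
            le_trans (card_insert_le _ _) (by simp)
          omega
      omega

lemma cnt_mod3_0 : ∀ m : ℕ,
    ((range m).filter (fun x => x % 3 = 0)).card = (m + 2) / 3 := by
  intro m
  induction m with
  | zero => simp
  | succ m ihm =>
    rw [range_add_one, filter_insert]
    by_cases h : m % 3 = 0
    · rw [if_pos h, card_insert_of_notMem (by simp)]
      omega
    · rw [if_neg h]
      omega

lemma cnt_mod3_1 : ∀ m : ℕ,
    ((range m).filter (fun x => x % 3 = 1)).card = (m + 1) / 3 := by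
  intro m
  induction m with
  | zero => simp
  | succ m ihm =>
    rw [range_add_one, filter_insert]
    by_cases h : m % 3 = 1
    · rw [if_pos h, card_insert_of_notMem (by simp)]
      omega
    · rw [if_neg h]
      omega

lemma fin_cnt (m r : ℕ) :
    ((Finset.univ : Finset (Fin m)).filter (fun j => j.val % 3 = r)).card
      = ((range m).filter (fun x => x % 3 = r)).card := by
  apply card_bij (fun (j : Fin m) _ => j.val)
  · intro j hj
    rw [mem_filter] at hj ⊢
    exact ⟨mem_range.mpr j.isLt, hj.2⟩
  · intro a ha b hb h
    exact Fin.val_injective h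
  · intro x hx
    rw [mem_filter, mem_range] at hx
    exact ⟨⟨x, hx.1⟩, mem_filter.mpr ⟨mem_univ _, hx.2⟩, rfl⟩

/-- The explicit packing. -/
noncomputable def F0 (n : ℕ) : Finset (Fin 4 × Fin n) :=
  Finset.univ.filter (fun p => (p.1 = 0 ∧ p.2.val % 3 = 0) ∨ (p.1 = 2 ∧ p.2.val % 3 = 1))

lemma F0_packing : IsPacking (Gr n) (↑(F0 n) : Set (Fin 4 × Fin n)) := by
  intro u hu v hv huv
  simp only [Finset.coe_filter, Set.mem_setOf_eq, F0, mem_univ, true_and] at hu hv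
  obtain ⟨a, i⟩ := u
  obtain ⟨b, j⟩ := v
  simp only at hu hv
  have hij : i ≠ j := by
    rintro rfl
    rcases hu with ⟨rfl, hi⟩ | ⟨rfl, hi⟩ <;> rcases hv with ⟨rfl, hj⟩ | ⟨rfl, hj⟩
    · exact huv rfl
    · omega
    · omega
    · exact huv rfl
  rcases hu with ⟨rfl, hi⟩ | ⟨rfl, hi⟩ <;> rcases hv with ⟨rfl, hj⟩ | ⟨rfl, hj⟩
  · refine disj_of_far ?_
    have : i.val ≠ j.val := fun h => hij (Fin.val_injective h)
    omega
  · exact disj_opposite (by decide) hij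
  · exact disj_opposite (by decide) hij
  · refine disj_of_far ?_
    have : i.val ≠ j.val := fun h => hij (Fin.val_injective h)
    omega

lemma F0_card : (F0 n).card = (2 * n + 2) / 3 := by
  classical
  have hsplit : F0 n =
      (Finset.univ.filter (fun p : Fin 4 × Fin n => p.1 = 0 ∧ p.2.val % 3 = 0)) ∪
      (Finset.univ.filter (fun p : Fin 4 × Fin n => p.1 = 2 ∧ p.2.val % 3 = 1)) := by
    rw [F0, filter_or]
  have hdisj : Disjoint
      (Finset.univ.filter (fun p : Fin 4 × Fin n => p.1 = 0 ∧ p.2.val % 3 = 0))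
      (Finset.univ.filter (fun p : Fin 4 × Fin n => p.1 = 2 ∧ p.2.val % 3 = 1)) := by
    rw [Finset.disjoint_left]
    intro p hp hq
    rw [mem_filter] at hp hq
    rw [hp.2.1] at hq
    exact absurd hq.2.1 (by decide)
  have h0 : (Finset.univ.filter (fun p : Fin 4 × Fin n => p.1 = 0 ∧ p.2.val % 3 = 0)).card
      = ((Finset.univ : Finset (Fin n)).filter (fun j => j.val % 3 = 0)).card := by
    apply card_bij (fun p _ => p.2)
    · intro p hp
      rw [mem_filter] at hp ⊢
      exact ⟨mem_univ _, hp.2.2⟩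
    · intro p hp q hq h
      rw [mem_filter] at hp hq
      exact Prod.ext (hp.2.1.trans hq.2.1.symm) h
    · intro j hj
      rw [mem_filter] at hj
      exact ⟨(0, j), mem_filter.mpr ⟨mem_univ _, rfl, hj.2⟩, rfl⟩
  have h1 : (Finset.univ.filter (fun p : Fin 4 × Fin n => p.1 = 2 ∧ p.2.val % 3 = 1)).card
      = ((Finset.univ : Finset (Fin n)).filter (fun j => j.val % 3 = 1)).card := by
    apply card_bij (fun p _ => p.2)
    · intro p hp
      rw [mem_filter] at hp ⊢
      exact ⟨mem_univ _, hp.2.2⟩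
    · intro p hp q hq h
      rw [mem_filter] at hp hq
      exact Prod.ext (hp.2.1.trans hq.2.1.symm) h
    · intro j hj
      rw [mem_filter] at hj
      exact ⟨(2, j), mem_filter.mpr ⟨mem_univ _, rfl, hj.2⟩, rfl⟩
  rw [hsplit, card_union_of_disjoint hdisj, h0, h1, fin_cnt, fin_cnt,
    cnt_mod3_0, cnt_mod3_1]
  obtain ⟨q, r, hr, rfl⟩ : ∃ q r, r < 3 ∧ n = 3 * q + r := ⟨n / 3, n % 3, by omega, by omega⟩
  interval_cases r <;> omega

lemma packing_card_le {S : Set (Fin 4 × Fin n)} (hS : IsPacking (Gr n) S) :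
    S.ncard ≤ (2 * n + 2) / 3 := by
  classical
  rw [Set.ncard_eq_toFinset_card' S]
  set F := S.toFinset with hF
  have hmem : ∀ p, p ∈ F → p ∈ S := fun p hp => Set.mem_toFinset.mp hp
  set T := F.image (fun p => p.2.val) with hT
  have hcard : T.card = F.card := by
    apply Finset.card_image_of_injOn
    intro p hp q hq h
    have h2 : p.2 = q.2 := Fin.val_injective h
    by_contra hne
    have hd := hS (hmem p hp) (hmem q hq) hne
    obtain ⟨a, i⟩ := p
    obtain ⟨b, j⟩ := q
    simp only at h2
    subst h2
    have hab : a ≠ b := fun h => hne (by rw [h])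
    exact not_disj_same_col hab i hd
  rw [← hcard]
  apply card_no3 n
  · intro x hx
    obtain ⟨p, _, rfl⟩ := Finset.mem_image.mp hx
    exact p.2.isLt
  · intro j hj hj1 hj2
    obtain ⟨u, hu, hu2⟩ := Finset.mem_image.mp hj
    obtain ⟨v, hv, hv2⟩ := Finset.mem_image.mp hj1
    obtain ⟨w, hw, hw2⟩ := Finset.mem_image.mp hj2
    exact no_three hS (hmem u hu) (hmem v hv) (hmem w hw) (by omega) (by omega)

lemma packingNumber_Gr : packingNumber (Gr n) = (2 * n + 2) / 3 := by
  have hub : ∀ k ∈ {k | ∃ S : Set (Fin 4 × Fin n), IsPacking (Gr n) S ∧ S.ncard = k},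
      k ≤ (2 * n + 2) / 3 := by
    rintro k ⟨S, hS, rfl⟩
    exact packing_card_le hS
  have hmem : (2 * n + 2) / 3 ∈
      {k | ∃ S : Set (Fin 4 × Fin n), IsPacking (Gr n) S ∧ S.ncard = k} :=
    ⟨↑(F0 n), F0_packing, by rw [Set.ncard_coe_finset]; exact F0_card⟩
  exact le_antisymm (csSup_le ⟨_, hmem⟩ hub) (le_csSup ⟨_, hub⟩ hmem)

theorem stmt17 (n : ℕ) (hn : 1 ≤ n) :
    (packingNumber ((cycleGraph 4).boxProd (pathGraph n)) : ℤ) = ⌈(2 * n : ℚ) / 3⌉ := by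
  have key : packingNumber ((cycleGraph 4).boxProd (pathGraph n)) = (2 * n + 2) / 3 :=
    packingNumber_Gr
  rw [key]
  symm
  rw [Int.ceil_eq_iff]
  set k := (2 * n + 2) / 3 with hk
  have h1 : 3 * k ≤ 2 * n + 2 := by omega
  have h2 : 2 * n ≤ 3 * k := by omega
  have q1 : (3 * k : ℚ) ≤ 2 * n + 2 := by exact_mod_cast h1
  have q2 : (2 * n : ℚ) ≤ 3 * k := by exact_mod_cast h2
  constructor
  · push_cast
    rw [lt_div_iff₀ (by norm_num : (0:ℚ) < 3)]
    linarith
  · push_cast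
    rw [div_le_iff₀ (by norm_num : (0:ℚ) < 3)]
    linarith
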